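/- Consider the implicit RK method with stability function R(Z) = (I - Z/2 + Z²/16)^{-1}(I + Z/2 + Z²/16) (Qin–Zhang method) applied to u̇ = Lu with L seminegative on a real Hilbert space. Setting w = (I - (τ/2)L + (τ²/16)L²)^{-1} u^n and u^{n+1} = R(τL)u^n, the energy identity ‖u^{n+1}‖² - ‖u^n‖² = -τ [w,w] - (τ³/16)[Lw, Lw] holds, where [w,v] = -⟨Lw,v⟩ - ⟨w,Lv⟩. Hence ‖u^{n+1}‖ ≤ ‖u^n‖ for all τ > 0. -/
import Mathlib


open scoped RealInnerProductSpace

/-- Energy identity of the Qin–Zhang method: with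
`(I - (τ/2)L + (τ²/16)L²) w = u⁰` and `u¹ = (I + (τ/2)L + (τ²/16)L²) w`, one has
`‖u¹‖² - ‖u⁰‖² = -τ [w,w] - (τ³/16) [Lw, Lw]` where `[w,v] = -⟪Lw,v⟫ - ⟪w,Lv⟫`;
in particular `‖u¹‖ ≤ ‖u⁰‖`. -/
theorem qin_zhang_energy
    {V : Type*} [NormedAddCommGroup V] [InnerProductSpace ℝ V] [CompleteSpace V]
    (L : V →L[ℝ] V) (hL : ∀ v : V, ⟪L v, v⟫ ≤ 0)
    (τ : ℝ) (hτ : 0 < τ) (u0 u1 w : V)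
    (hw : w - (τ / 2) • L w + (τ ^ 2 / 16) • L (L w) = u0)
    (hu1 : u1 = w + (τ / 2) • L w + (τ ^ 2 / 16) • L (L w)) :
    ‖u1‖ ^ 2 - ‖u0‖ ^ 2 =
      -τ * (-⟪L w, w⟫ - ⟪w, L w⟫) -
        (τ ^ 3 / 16) * (-⟪L (L w), L w⟫ - ⟪L w, L (L w)⟫) ∧
    ‖u1‖ ≤ ‖u0‖ := by
  have key : ‖u1‖ ^ 2 - ‖u0‖ ^ 2 =
      -τ * (-⟪L w, w⟫ - ⟪w, L w⟫) -
        (τ ^ 3 / 16) * (-⟪L (L w), L w⟫ - ⟪L w, L (L w)⟫) := by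
    rw [← real_inner_self_eq_norm_sq, ← real_inner_self_eq_norm_sq, ← hw, hu1]
    simp only [inner_add_left, inner_add_right, inner_sub_left, inner_sub_right,
      real_inner_smul_left, real_inner_smul_right]
    rw [real_inner_comm (L w) w, real_inner_comm (L (L w)) (L w),
      real_inner_comm (L (L w)) w]
    ring
  refine ⟨key, ?_⟩
  have h1 : ‖u1‖ ^ 2 ≤ ‖u0‖ ^ 2 := by
    have a := hL w
    have b := hL (L w)
    nlinarith [hτ.le, pow_pos hτ 3, a, b, real_inner_comm w (L w),
      real_inner_comm (L w) (L (L w))]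
  exact (pow_le_pow_iff_left₀ (norm_nonneg u1) (norm_nonneg u0) two_ne_zero).mp h1
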